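/- For each 0 ≤ s ≤ q − 1, the dimension over F of the space of functions J(n,q) → F that are restrictions of polynomials of total degree at most s equals C(n+s, s). -/

import Mathlib

open MvPolynomial

/-- The number of monomials in `n` variables of total degree at most `s`. -/
lemma aux_equiv_sym (n s : ℕ) :
    Nonempty (↥{d : Fin n →₀ ℕ | (d.sum fun _ e => e) ≤ s} ≃ Sym (Fin (n + 1)) s) := by
  classical
  refine ⟨?_⟩
  have e1 : ↥{d : Fin n →₀ ℕ | (d.sum fun _ e => e) ≤ s} ≃ {g : Fin n → ℕ // ∑ j, g j ≤ s} :=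
    (Finsupp.equivFunOnFinite).subtypeEquiv (fun d => by
      rw [Set.mem_setOf_eq, Finsupp.sum_fintype _ _ (fun _ => rfl)]
      rfl)
  have e2 : {g : Fin n → ℕ // ∑ j, g j ≤ s} ≃ {h : Fin (n + 1) → ℕ // ∑ j, h j = s} :=
    { toFun := fun g => ⟨Fin.cons (s - ∑ j, g.1 j) g.1, by
        rw [Fin.sum_univ_succ]
        simp only [Fin.cons_zero, Fin.cons_succ]
        have := g.2; omega⟩
      invFun := fun h => ⟨fun j => h.1 j.succ, by
        have := h.2; rw [Fin.sum_univ_succ] at this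
        show ∑ j : Fin n, h.1 j.succ ≤ s
        omega⟩
      left_inv := by
        intro g; apply Subtype.ext; funext j; simp [Fin.cons_succ]
      right_inv := by
        intro h
        apply Subtype.ext; funext j
        refine Fin.cases ?_ ?_ j
        · have := h.2; rw [Fin.sum_univ_succ] at this
          simp only [Fin.cons_zero]
          omega
        · intro k; simp [Fin.cons_succ] }
  exact e1.trans (e2.trans (Sym.equivNatSumOfFintype (Fin (n + 1)) s).symm)

lemma aux_finrank (F : Type*) [Field F] (n s : ℕ) :
    Module.finrank F (restrictTotalDegree (Fin n) F s) = (n + s).choose s := by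
  classical
  obtain ⟨e⟩ := aux_equiv_sym n s
  haveI : Fintype ↥{d : Fin n →₀ ℕ | (d.sum fun _ e => e) ≤ s} := Fintype.ofEquiv _ e.symm
  have b : Module.Basis ↥{d : Fin n →₀ ℕ | (d.sum fun _ e => e) ≤ s} F
      (restrictTotalDegree (Fin n) F s) :=
    basisRestrictSupport F {d : Fin n →₀ ℕ | (d.sum fun _ e => e) ≤ s}
  rw [Module.finrank_eq_card_basis b, Fintype.card_congr e, Sym.card_sym_eq_choose]
  congr 1
  simp only [Fintype.card_fin]
  omega

/-- Key vanishing lemma: a polynomial of total degree `< q` vanishing on all monotone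
tuples of the `q` distinct values `i 0, ..., i (q-1)` is zero. -/
lemma aux_vanish {F : Type*} [Field F] :
    ∀ (n q : ℕ) (i : Fin q → F), Function.Injective i →
      ∀ p : MvPolynomial (Fin n) F, p.totalDegree + 1 ≤ q →
        (∀ v : Fin n → Fin q, Monotone v → eval (fun j => i (v j)) p = 0) → p = 0 := by
  intro n
  induction n with
  | zero =>
    intro q i hi p hdeg hvan
    have h0 := hvan (fun j => j.elim0) (fun a => a.elim0)
    rw [eq_C_of_isEmpty p, eval_C] at h0
    rw [eq_C_of_isEmpty p, h0, map_zero]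
  | succ n ihn =>
    intro q
    induction q with
    | zero =>
      intro i hi p hdeg hvan
      exact absurd hdeg (by omega)
    | succ q ihq =>
      intro i hi p hdeg hvan
      set P := finSuccEquiv F n p with hP
      set c := i 0 with hc
      -- evaluation commutation
      have comm : ∀ (y : Fin n → F) (c' : F),
          eval y (Polynomial.eval (MvPolynomial.C c') P) = eval (Fin.cons c' y) p := by
        intro y c'
        rw [eval_eq_eval_mv_eval' y c' p, Polynomial.eval_map]
        have h := Polynomial.eval₂_at_apply (p := P) (eval y : MvPolynomial (Fin n) F →+* F)
          (MvPolynomial.C c')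
        rw [eval_C] at h
        rw [← hP, ← h]
      -- Step 1 : the partial evaluation at `c` is zero
      have hr : Polynomial.eval (MvPolynomial.C c) P = 0 := by
        apply ihn (q + 1) i hi
        · -- degree bound
          have hle : (Polynomial.eval (MvPolynomial.C c) P).totalDegree ≤ p.totalDegree := by
            rw [Polynomial.eval_eq_sum_range]
            refine (totalDegree_finset_sum _ _).trans ?_
            apply Finset.sup_le
            intro k hk
            by_cases h0 : P.coeff k = 0
            · simp [h0]
            · refine (totalDegree_mul _ _).trans ?_
              have h1 : (MvPolynomial.C c ^ k : MvPolynomial (Fin n) F).totalDegree = 0 := by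
                rw [← map_pow, totalDegree_C]
              have h2 := totalDegree_coeff_finSuccEquiv_add_le p k (by rw [← hP]; exact h0)
              rw [← hP] at h2
              omega
          omega
        · intro v hv
          have hmono : Monotone (Fin.cons (0 : Fin (q + 1)) v : Fin (n + 1) → Fin (q + 1)) := by
            intro a b hab
            rcases Fin.eq_zero_or_eq_succ a with rfl | ⟨a', rfl⟩
            · rw [Fin.cons_zero]
              exact Fin.zero_le _
            · rcases Fin.eq_zero_or_eq_succ b with rfl | ⟨b', rfl⟩
              · exact absurd (Fin.le_zero_iff.mp hab) (Fin.succ_ne_zero a')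
              · rw [Fin.cons_succ, Fin.cons_succ]
                exact hv (by rwa [Fin.succ_le_succ_iff] at hab)
          have h0 := hvan (Fin.cons 0 v) hmono
          have hfun : (fun j => i ((Fin.cons 0 v : Fin (n + 1) → Fin (q + 1)) j))
              = Fin.cons c (fun j => i (v j)) := by
            funext j
            refine Fin.cases ?_ ?_ j
            · rw [Fin.cons_zero, Fin.cons_zero, hc]
            · intro k; rw [Fin.cons_succ, Fin.cons_succ]
          rw [hfun] at h0
          rw [comm]
          exact h0
      -- Step 2 : factor
      obtain ⟨Q, hQ⟩ := Polynomial.dvd_iff_isRoot.mpr hr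
      have hcoeff : ∀ k, Q.coeff k = P.coeff (k + 1) + MvPolynomial.C c * Q.coeff (k + 1) := by
        intro k
        have h1 : P.coeff (k + 1)
            = (Polynomial.X * Q).coeff (k + 1)
              - (Polynomial.C (MvPolynomial.C c) * Q).coeff (k + 1) := by
          rw [hQ, sub_mul, Polynomial.coeff_sub]
        rw [Polynomial.coeff_X_mul, Polynomial.coeff_C_mul] at h1
        rw [h1]; ring
      -- Step 3 : coefficient degree bound
      have hgood : ∀ m k, Q.natDegree ≤ k + m →
          Q.coeff k = 0 ∨ (Q.coeff k).totalDegree + (k + 1) ≤ p.totalDegree := by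
        intro m
        induction m with
        | zero =>
          intro k hk
          by_cases hlt : Q.natDegree < k
          · exact Or.inl (Polynomial.coeff_eq_zero_of_natDegree_lt hlt)
          · have h1 : Q.coeff (k + 1) = 0 :=
              Polynomial.coeff_eq_zero_of_natDegree_lt (by omega)
            have h2 : Q.coeff k = P.coeff (k + 1) := by
              rw [hcoeff k, h1, mul_zero, add_zero]
            by_cases hz : Q.coeff k = 0
            · exact Or.inl hz
            · right
              rw [h2]
              have := totalDegree_coeff_finSuccEquiv_add_le p (k + 1)
                (by rw [← hP, ← h2]; exact hz)
              rw [← hP] at this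
              exact this
        | succ m ih =>
          intro k hk
          by_cases hz : Q.coeff k = 0
          · exact Or.inl hz
          right
          have hB := ih (k + 1) (by omega)
          by_cases hB0 : Q.coeff (k + 1) = 0
          · have h2 : Q.coeff k = P.coeff (k + 1) := by
              rw [hcoeff k, hB0, mul_zero, add_zero]
            rw [h2]
            have := totalDegree_coeff_finSuccEquiv_add_le p (k + 1)
              (by rw [← hP, ← h2]; exact hz)
            rw [← hP] at this
            exact this
          · have hB' : (Q.coeff (k + 1)).totalDegree + (k + 2) ≤ p.totalDegree :=
              hB.resolve_left hB0
            have hCmul : (MvPolynomial.C c * Q.coeff (k + 1)).totalDegree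
                ≤ (Q.coeff (k + 1)).totalDegree := by
              refine (totalDegree_mul _ _).trans ?_
              rw [totalDegree_C, zero_add]
            by_cases hA0 : P.coeff (k + 1) = 0
            · have : (Q.coeff k).totalDegree ≤ (Q.coeff (k + 1)).totalDegree := by
                rw [hcoeff k, hA0, zero_add]
                exact hCmul
              omega
            · have hA' := totalDegree_coeff_finSuccEquiv_add_le p (k + 1) (by rw [← hP]; exact hA0)
              rw [← hP] at hA'
              have hle : (Q.coeff k).totalDegree
                  ≤ max (P.coeff (k + 1)).totalDegree (Q.coeff (k + 1)).totalDegree := by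
                rw [hcoeff k]
                refine (totalDegree_add _ _).trans ?_
                exact max_le_max le_rfl hCmul
              rcases max_choice (P.coeff (k + 1)).totalDegree (Q.coeff (k + 1)).totalDegree
                with hm | hm <;> rw [hm] at hle <;> omega
      have hcoefbd : ∀ k, Q.coeff k = 0 ∨ (Q.coeff k).totalDegree + (k + 1) ≤ p.totalDegree :=
        fun k => hgood Q.natDegree k (Nat.le_add_left _ _)
      -- Step 4 : back to MvPolynomial
      have hCc : finSuccEquiv F n (MvPolynomial.C c : MvPolynomial (Fin (n + 1)) F)
          = Polynomial.C (MvPolynomial.C c) := by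
        simp [finSuccEquiv_apply]
      set p₁ := (finSuccEquiv F n).symm Q with hp₁def
      have hps : p = (X 0 - MvPolynomial.C c) * p₁ := by
        apply (finSuccEquiv F n).injective
        rw [map_mul, map_sub, finSuccEquiv_X_zero, hCc, hp₁def,
          (finSuccEquiv F n).apply_symm_apply, ← hQ, hP]
      by_cases hp₁ : p₁ = 0
      · rw [hps, hp₁, mul_zero]
      -- p₁ ≠ 0
      have hQ0 : Q ≠ 0 := by
        intro h
        apply hp₁
        rw [hp₁def, h, map_zero]
      have h1D : 1 ≤ p.totalDegree := by
        obtain ⟨k, hk⟩ : ∃ k, Q.coeff k ≠ 0 := by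
          by_contra h
          push_neg at h
          exact hQ0 (Polynomial.ext fun k => by simp [h k])
        have := (hcoefbd k).resolve_left hk
        omega
      have hsymmC0 : ∀ a : MvPolynomial (Fin n) F,
          finSuccEquiv F n (rename Fin.succ a) = Polynomial.C a := by
        intro a
        induction a using MvPolynomial.induction_on with
        | C r => rw [rename_C]; simp [finSuccEquiv_apply]
        | add p q hp hq => rw [map_add, map_add, hp, hq, map_add]
        | mul_X p j hp => rw [map_mul, rename_X, map_mul, hp, finSuccEquiv_X_succ, ← map_mul]
      have hsymmC : ∀ a : MvPolynomial (Fin n) F,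
          (finSuccEquiv F n).symm (Polynomial.C a) = rename Fin.succ a := by
        intro a
        rw [← hsymmC0 a, AlgEquiv.symm_apply_apply]
      have hsymmX : (finSuccEquiv F n).symm Polynomial.X = X 0 := by
        apply (finSuccEquiv F n).injective
        rw [(finSuccEquiv F n).apply_symm_apply, finSuccEquiv_X_zero]
      -- degree of p₁
      have hdegp₁ : p₁.totalDegree + 1 ≤ p.totalDegree := by
        have hsum : p₁ = ∑ k ∈ Finset.range (Q.natDegree + 1),
            rename Fin.succ (Q.coeff k) * X 0 ^ k := by
          rw [hp₁def]
          conv_lhs => rw [Polynomial.as_sum_range Q]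
          rw [map_sum]
          refine Finset.sum_congr rfl fun k _ => ?_
          rw [← Polynomial.C_mul_X_pow_eq_monomial, map_mul, map_pow, hsymmC, hsymmX]
        have : p₁.totalDegree ≤ p.totalDegree - 1 := by
          rw [hsum]
          refine (totalDegree_finset_sum _ _).trans ?_
          apply Finset.sup_le
          intro k hk
          by_cases h0 : Q.coeff k = 0
          · simp [h0]
          · have h2 := (hcoefbd k).resolve_left h0
            refine (totalDegree_mul _ _).trans ?_
            have h3 := totalDegree_rename_le Fin.succ (Q.coeff k)
            have h4 : ((X 0 : MvPolynomial (Fin (n + 1)) F) ^ k).totalDegree = k :=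
              totalDegree_X_pow _ _
            omega
        omega
      -- vanishing for p₁
      have hvan₁ : ∀ v : Fin (n + 1) → Fin q, Monotone v →
          eval (fun j => (i ∘ Fin.succ) (v j)) p₁ = 0 := by
        intro v hv
        have hmono : Monotone (fun j => Fin.succ (v j)) := fun a b hab =>
          Fin.succ_le_succ_iff.mpr (hv hab)
        have h0 := hvan (fun j => Fin.succ (v j)) hmono
        rw [hps, map_mul, map_sub, eval_X, eval_C] at h0
        rcases mul_eq_zero.mp h0 with h | h
        · exfalso
          have : i (Fin.succ (v 0)) = i 0 := by
            have := sub_eq_zero.mp h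
            exact this
          exact Fin.succ_ne_zero (v 0) (hi this)
        · exact h
      have := ihq (i ∘ Fin.succ) (hi.comp (Fin.succ_injective q)) p₁ (by omega) hvan₁
      rw [hps, this, mul_zero]

theorem stmt_7 {F : Type*} [Field F] (n q : ℕ) (hn : 1 ≤ n) (hq : 1 ≤ q)
    (i : Fin q → F) (hi : Function.Injective i) (s : ℕ) (hs : s ≤ q - 1) :
    let J : Set (Fin n → F) :=
      {x | ∃ v : Fin n → Fin q, Monotone v ∧ x = fun j => i (v j)}
    Module.finrank F (Submodule.span F
      {f : J → F | ∃ p : MvPolynomial (Fin n) F, p.totalDegree ≤ s ∧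
        ∀ x : J, f x = MvPolynomial.eval x.1 p}) = (n + s).choose s := by
  intro J
  classical
  let E : MvPolynomial (Fin n) F →ₗ[F] (J → F) :=
    { toFun := fun p => fun x => eval x.1 p
      map_add' := by intro p q'; funext x; simp
      map_smul' := by intro a p; funext x; simp [smul_eval] }
  have hset : {f : J → F | ∃ p : MvPolynomial (Fin n) F, p.totalDegree ≤ s ∧
      ∀ x : J, f x = MvPolynomial.eval x.1 p}
      = E '' (restrictTotalDegree (Fin n) F s : Set (MvPolynomial (Fin n) F)) := by
    ext f
    constructor
    · rintro ⟨p, hdeg, hf⟩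
      refine ⟨p, (mem_restrictTotalDegree _ s p).mpr hdeg, ?_⟩
      funext x
      exact (hf x).symm
    · rintro ⟨p, hp, rfl⟩
      exact ⟨p, (mem_restrictTotalDegree _ s p).mp hp, fun x => rfl⟩
  rw [hset, Submodule.span_image]
  have hrange : Submodule.map E (Submodule.span F
      (restrictTotalDegree (Fin n) F s : Set (MvPolynomial (Fin n) F)))
      = LinearMap.range (E.comp (restrictTotalDegree (Fin n) F s).subtype) := by
    rw [Submodule.span_eq, LinearMap.range_comp, Submodule.range_subtype]
  rw [hrange]
  have hinj : Function.Injective (E.comp (restrictTotalDegree (Fin n) F s).subtype) := by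
    rw [injective_iff_map_eq_zero]
    rintro ⟨p, hp⟩ h
    have hdeg : p.totalDegree ≤ s := (mem_restrictTotalDegree _ s p).mp hp
    have hz : p = 0 := by
      apply aux_vanish n q i hi p (by omega)
      intro v hv
      have hx : (fun j => i (v j)) ∈ J := ⟨v, hv, rfl⟩
      exact congrFun h ⟨_, hx⟩
    exact Subtype.ext hz
  rw [LinearMap.finrank_range_of_inj hinj]
  exact aux_finrank F n s
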